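/- Let G be an edge-coloured graph that is rainbow connected, and let V₁, V₂, V₃ be a nonempty tripartition of V(G) such that every edge between distinct parts has colour k. Then for any two distinct parts Vᵢ, Vⱼ, there is at least one edge of G between Vᵢ and Vⱼ. -/

import Mathlib

def RainbowConnected {V α : Type*} (G : SimpleGraph V) (c : Sym2 V → α) : Prop :=
  ∀ u v : V, ∃ p : G.Walk u v, p.IsPath ∧ (p.edges.map c).Nodup

theorem stmt_2 {V : Type*} (G : SimpleGraph V) (k : ℕ) (c : Sym2 V → ℕ)
    (P : Fin 3 → Set V)
    (hne : ∀ i, (P i).Nonempty)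
    (hdisj : ∀ i j, i ≠ j → Disjoint (P i) (P j))
    (hcover : P 0 ∪ P 1 ∪ P 2 = Set.univ)
    (hRC : RainbowConnected G c)
    (hcross : ∀ i j, i ≠ j → ∀ u v, u ∈ P i → v ∈ P j → G.Adj u v → c s(u, v) = k) :
    ∀ i j, i ≠ j → ∃ u ∈ P i, ∃ v ∈ P j, G.Adj u v := by
  have hpart : ∀ v : V, ∃ i, v ∈ P i := by
    intro v
    have hv : v ∈ P 0 ∪ P 1 ∪ P 2 := hcover.ge (Set.mem_univ v)
    rcases hv with (h | h) | h
    exacts [⟨0, h⟩, ⟨1, h⟩, ⟨2, h⟩]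
  choose f hf using hpart
  have hfuniq : ∀ v i, v ∈ P i → f v = i := by
    intro v i hvi
    by_contra h
    exact Set.disjoint_left.mp (hdisj _ _ h) (hf v) hvi
  have key : ∀ {u v : V} (p : G.Walk u v), (p.edges.map c).Nodup → f u ≠ f v →
      ∃ a b, a ∈ P (f u) ∧ b ∈ P (f v) ∧ G.Adj a b ∧ s(a, b) ∈ p.edges := by
    intro u v p
    induction p with
    | nil => intro _ h; exact absurd rfl h
    | @cons u w v hadj q ih =>
      intro hnd hne'
      rw [SimpleGraph.Walk.edges_cons, List.map_cons, List.nodup_cons] at hnd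
      by_cases hw : f w = f u
      · obtain ⟨a, b, ha, hb, hab, hmem⟩ := ih hnd.2 (hw ▸ hne')
        exact ⟨a, b, hw ▸ ha, hb, hab, List.mem_cons_of_mem _ hmem⟩
      · have hcuw : c s(u, w) = k := hcross (f u) (f w) (Ne.symm hw) u w (hf u) (hf w) hadj
        by_cases hwv : f w = f v
        · exact ⟨u, w, hf u, hwv ▸ hf w, hadj, by simp⟩
        · obtain ⟨a, b, ha, hb, hab, hmem⟩ := ih hnd.2 hwv
          have hcab : c s(a, b) = k := hcross (f w) (f v) hwv a b ha hb hab
          exact absurd (List.mem_map_of_mem (f := c) hmem) (by rw [hcab, ← hcuw] at *; exact hnd.1)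
  intro i j hij
  obtain ⟨x, hx⟩ := hne i
  obtain ⟨y, hy⟩ := hne j
  obtain ⟨p, _, hnd⟩ := hRC x y
  have hfx := hfuniq x i hx
  have hfy := hfuniq y j hy
  obtain ⟨a, b, ha, hb, hab, _⟩ := key p hnd (by rw [hfx, hfy]; exact hij)
  exact ⟨a, hfx ▸ ha, b, hfy ▸ hb, hab⟩
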